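/- arXiv:2604.20472 — 2 statements merged into one kernel-verified Lean document; each statement's English description precedes it below -/
import Mathlib

section
/- Let N ∈ ℕ, α ∈ (0,1), and let (D₁, …, D_{N+1}) be real-valued random variables on a probability space whose joint distribution is invariant under every permutation of the N+1 coordinates (exchangeability). Let k := ⌈(1−α)(N+1)⌉ and suppose k ≤ N, and let q denote the k-th smallest value among D₁, …, D_N. Then P(D_{N+1} ≤ q) ≥ 1 − α. -/
open MeasureTheory

open Finset in
/-- At least `m` indices have strict rank `< m`. -/
lemma rank_count_ge {n : ℕ} (x : Fin n → ℝ) (m : ℕ) (hm : m ≤ n) :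
    m ≤ (Finset.univ.filter fun i => ((Finset.univ.filter fun j => x j < x i).card < m)).card := by
  by_contra h
  push_neg at h
  set S := Finset.univ.filter fun i => ((Finset.univ.filter fun j => x j < x i).card < m) with hS
  have hne : (Finset.univ \ S).Nonempty := by
    rw [Finset.sdiff_nonempty]
    intro hsub
    have := Finset.card_le_card hsub
    simp [Fintype.card_fin] at this
    omega
  obtain ⟨i₀, hi₀, hmin⟩ := Finset.exists_min_image _ x hne
  have hsub : (Finset.univ.filter fun j => x j < x i₀) ⊆ S := by
    intro j hj
    simp only [Finset.mem_filter, Finset.mem_univ, true_and] at hj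
    by_contra hjS
    have : j ∈ Finset.univ \ S := by simp [hjS]
    exact absurd (hmin j this) (not_le.mpr hj)
  have : i₀ ∈ S := by
    rw [hS, Finset.mem_filter]
    exact ⟨Finset.mem_univ _, lt_of_le_of_lt (Finset.card_le_card hsub) h⟩
  simp [Finset.mem_sdiff, this] at hi₀

/-- In a sorted list, `y ≤ l[m]` iff at most `m` elements are `< y`. -/
lemma sorted_le_iff_countP {l : List ℝ} (hl : l.Pairwise (· ≤ ·)) {m : ℕ} (hm : m < l.length) (y : ℝ) :
    y ≤ l[m] ↔ l.countP (fun a => decide (a < y)) ≤ m := by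
  induction l generalizing m with
  | nil => simp at hm
  | cons a t ih =>
    rw [List.pairwise_cons] at hl
    obtain ⟨ha, ht⟩ := hl
    rcases m with _ | m
    · simp only [List.getElem_cons_zero, List.countP_cons, Nat.le_zero, Nat.add_eq_zero]
      constructor
      · intro hy
        constructor
        · rw [List.countP_eq_zero]
          intro b hb
          simp only [decide_eq_true_eq]
          exact not_lt.mpr (le_trans hy (ha b hb))
        · simp [not_lt.mpr hy]
      · rintro ⟨-, h2⟩
        by_contra hc
        simp [not_le.mp hc] at h2
    · simp only [List.getElem_cons_succ, List.countP_cons]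
      have hm' : m < t.length := by simpa using hm
      by_cases hay : a < y
      · rw [ih ht hm']
        simp [hay]
      · have hya : y ≤ a := not_lt.mp hay
        have h1 : y ≤ t[m] := le_trans hya (ha _ (List.getElem_mem hm'))
        have h2 : t.countP (fun b => decide (b < y)) = 0 := by
          rw [List.countP_eq_zero]
          intro b hb
          simp only [decide_eq_true_eq]
          exact not_lt.mpr (le_trans hya (ha b hb))
        simp [hay, h1, h2]

lemma countP_ofFn' {n : ℕ} (f : Fin n → ℝ) (p : ℝ → Bool) :
    (List.ofFn f).countP p = (Finset.univ.filter fun i => p (f i)).card := by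
  rw [List.ofFn_eq_map, List.countP_map]
  have h1 : (Finset.univ.filter fun i => p (f i)).card
      = Multiset.countP (fun i => p (f i) = true) (Finset.univ : Finset (Fin n)).val := by
    rw [Multiset.countP_eq_card_filter]; rfl
  have h2 : (Finset.univ : Finset (Fin n)).val = ↑(List.finRange n) := rfl
  rw [h1, h2, Multiset.coe_countP]
  congr 1; funext b; simp [Function.comp]

/-- Split conformal prediction coverage guarantee: if the scores
`D 0, …, D N` (the first `N` being calibration scores, the last one the test
score) are exchangeable, `k = ⌈(1-α)(N+1)⌉ ≤ N`, and `q` is the `k`-th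
smallest of the calibration scores, then `P(D_{N+1} ≤ q) ≥ 1 - α`. -/
theorem split_conformal_coverage
    {Ω : Type*} {mΩ : MeasurableSpace Ω} (μ : Measure Ω) [IsProbabilityMeasure μ]
    (N : ℕ) (α : ℝ) (hα : α ∈ Set.Ioo (0 : ℝ) 1)
    (D : Fin (N + 1) → Ω → ℝ) (hD : ∀ i, Measurable (D i))
    (hexch : ∀ σ : Equiv.Perm (Fin (N + 1)),
      Measure.map (fun ω (i : Fin (N + 1)) => D (σ i) ω) μ
        = Measure.map (fun ω (i : Fin (N + 1)) => D i ω) μ)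
    (k : ℕ) (hk : k = ⌈(1 - α) * (N + 1 : ℝ)⌉₊) (hkN : k ≤ N)
    (q : Ω → ℝ)
    (hq : ∀ ω, q ω =
      (((List.ofFn fun i : Fin N => D i.castSucc ω).mergeSort (· ≤ ·)).getD (k - 1) 0)) :
    ENNReal.ofReal (1 - α) ≤ μ {ω | D (Fin.last N) ω ≤ q ω} := by
  obtain ⟨hα0, hα1⟩ := hα
  have hpos : (0 : ℝ) < (1 - α) * (N + 1 : ℝ) := by
    have : (0:ℝ) < (N:ℝ) + 1 := by positivity
    nlinarith
  have hk1 : 1 ≤ k := by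
    rw [hk]
    exact Nat.ceil_pos.mpr hpos
  have hN1 : 1 ≤ N := le_trans hk1 hkN
  -- pointwise characterization of the coverage event
  have key : ∀ ω, (D (Fin.last N) ω ≤ q ω ↔
      ((Finset.univ.filter fun j : Fin (N+1) => D j ω < D (Fin.last N) ω).card < k)) := by
    intro ω
    set y := D (Fin.last N) ω with hy
    set l := (List.ofFn fun i : Fin N => D i.castSucc ω) with hl
    have hlen : (l.mergeSort (· ≤ ·)).length = N := by
      rw [List.length_mergeSort, hl, List.length_ofFn]
    have hkm : k - 1 < (l.mergeSort (· ≤ ·)).length := by omega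
    rw [hq ω, List.getD_eq_getElem _ _ hkm,
      sorted_le_iff_countP (List.pairwise_mergeSort' (· ≤ ·) l) hkm,
      (List.mergeSort_perm l _).countP_eq, hl, countP_ofFn']
    have hcard : (Finset.univ.filter fun j : Fin (N+1) => D j ω < y).card
        = (Finset.univ.filter fun i : Fin N => (decide (D i.castSucc ω < y) = true)).card := by
      rw [Finset.card_filter, Finset.card_filter, Fin.sum_univ_castSucc]
      simp [← hy]
    rw [hcard]
    omega
  -- the event as a preimage
  set X : Ω → (Fin (N+1) → ℝ) := fun ω i => D i ω with hX
  have hXmeas : Measurable X := measurable_pi_lambda _ hD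
  set S : Fin (N+1) → Set (Fin (N+1) → ℝ) :=
    fun i => {x | (Finset.univ.filter fun j => x j < x i).card < k} with hSdef
  have hmeas_card : ∀ i : Fin (N+1), Measurable fun x : Fin (N+1) → ℝ =>
      (Finset.univ.filter fun j => x j < x i).card := by
    intro i
    have heq : (fun x : Fin (N+1) → ℝ => (Finset.univ.filter fun j => x j < x i).card)
        = fun x => ∑ j : Fin (N+1), if x j < x i then 1 else 0 := by
      funext x; rw [Finset.card_filter]
    rw [heq]
    exact Finset.measurable_sum _ fun j _ =>
      Measurable.ite (measurableSet_lt (measurable_pi_apply j) (measurable_pi_apply i))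
        measurable_const measurable_const
  have hSmeas : ∀ i, MeasurableSet (S i) := by
    intro i
    exact (hmeas_card i) (MeasurableSpace.measurableSet_top (s := {n : ℕ | n < k}))
  have hAeq : ∀ i, μ (X ⁻¹' S i) = μ (X ⁻¹' S (Fin.last N)) := by
    intro i
    set σ := Equiv.swap i (Fin.last N) with hσ
    have hσmeas : Measurable fun x : Fin (N+1) → ℝ => x ∘ σ :=
      measurable_pi_lambda _ fun j => measurable_pi_apply (σ j)
    have hcomp : (fun ω (j : Fin (N+1)) => D (σ j) ω)
        = (fun x : Fin (N+1) → ℝ => x ∘ σ) ∘ X := rfl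
    have hmap : Measure.map (fun x : Fin (N+1) → ℝ => x ∘ σ) (Measure.map X μ)
        = Measure.map X μ := by
      rw [Measure.map_map hσmeas hXmeas, ← hcomp]
      exact hexch σ
    have hpre : S i = (fun x : Fin (N+1) → ℝ => x ∘ σ) ⁻¹' (S (Fin.last N)) := by
      ext x
      simp only [hSdef, Set.mem_preimage, Set.mem_setOf_eq, Function.comp]
      have h1 : x (σ (Fin.last N)) = x i := by rw [hσ, Equiv.swap_apply_right]
      have h2 : (Finset.univ.filter fun j : Fin (N+1) => x (σ j) < x (σ (Fin.last N))).card
          = (Finset.univ.filter fun j : Fin (N+1) => x j < x i).card := by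
        rw [h1]
        apply Finset.card_bij (fun j _ => σ j)
        · intro a ha
          simp only [Finset.mem_filter, Finset.mem_univ, true_and] at ha ⊢
          exact ha
        · intro a _ b _ hab
          exact σ.injective hab
        · intro b hb
          refine ⟨σ.symm b, ?_, by simp⟩
          simp only [Finset.mem_filter, Finset.mem_univ, true_and, Equiv.apply_symm_apply] at hb ⊢
          exact hb
      rw [h2]
    rw [← Measure.map_apply hXmeas (hSmeas i), ← Measure.map_apply hXmeas (hSmeas (Fin.last N)),
      hpre, ← Measure.map_apply hσmeas (hSmeas (Fin.last N)), hmap]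
  -- sum of the measures is at least k
  have hsum_ge : (k : ENNReal) ≤ ∑ i : Fin (N+1), μ (X ⁻¹' S i) := by
    have hind : ∀ i : Fin (N+1), μ (X ⁻¹' S i)
        = ∫⁻ ω, Set.indicator (X ⁻¹' S i) (fun _ => 1) ω ∂μ := by
      intro i
      rw [lintegral_indicator (hXmeas (hSmeas i))]
      simp
    calc (k : ENNReal) = ∫⁻ _, (k : ENNReal) ∂μ := by simp
      _ ≤ ∫⁻ ω, ∑ i : Fin (N+1), Set.indicator (X ⁻¹' S i) (fun _ => 1) ω ∂μ := by
          apply lintegral_mono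
          intro ω
          have hrank := rank_count_ge (X ω) k (by omega)
          show (k : ENNReal) ≤ ∑ i : Fin (N+1), Set.indicator (X ⁻¹' S i) (fun _ => (1:ENNReal)) ω
          have heq : ∀ i : Fin (N+1), Set.indicator (X ⁻¹' S i) (fun _ => (1:ENNReal)) ω
              = if ((Finset.univ.filter fun j => X ω j < X ω i).card < k) then 1 else 0 := by
            intro i
            classical
            by_cases hc : (Finset.univ.filter fun j => X ω j < X ω i).card < k
            · simp [Set.indicator_apply, Set.mem_preimage, hSdef, Set.mem_setOf_eq, hc]
            · simp [Set.indicator_apply, Set.mem_preimage, hSdef, Set.mem_setOf_eq, hc]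
          rw [Finset.sum_congr rfl fun i _ => heq i, Finset.sum_boole]
          exact_mod_cast hrank
      _ = ∑ i : Fin (N+1), μ (X ⁻¹' S i) := by
          rw [lintegral_finset_sum]
          · exact Finset.sum_congr rfl fun i _ => (hind i).symm
          · exact fun i _ => (measurable_const.indicator (hXmeas (hSmeas i)))
  have htot : ∑ i : Fin (N+1), μ (X ⁻¹' S i)
      = ((N+1 : ℕ) : ENNReal) * μ (X ⁻¹' S (Fin.last N)) := by
    rw [Finset.sum_congr rfl fun i _ => hAeq i, Finset.sum_const, Finset.card_univ,
      Fintype.card_fin, nsmul_eq_mul]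
  have hmain : (k : ENNReal) ≤ ((N+1 : ℕ) : ENNReal) * μ (X ⁻¹' S (Fin.last N)) :=
    htot ▸ hsum_ge
  have hev : {ω | D (Fin.last N) ω ≤ q ω} = X ⁻¹' S (Fin.last N) := by
    ext ω
    simp only [Set.mem_setOf_eq, Set.mem_preimage, hSdef]
    exact key ω
  rw [hev]
  have hNne : ((N+1 : ℕ) : ENNReal) ≠ 0 := by simp
  have hNnt : ((N+1 : ℕ) : ENNReal) ≠ ⊤ := by simp
  have hdiv : (k : ENNReal) / ((N+1 : ℕ) : ENNReal) ≤ μ (X ⁻¹' S (Fin.last N)) := by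
    rw [ENNReal.div_le_iff hNne hNnt, mul_comm]
    exact hmain
  refine le_trans ?_ hdiv
  rw [ENNReal.le_div_iff_mul_le (Or.inl hNne) (Or.inl hNnt)]
  have h1 : ((N+1 : ℕ) : ENNReal) = ENNReal.ofReal ((N+1 : ℕ) : ℝ) :=
    (ENNReal.ofReal_natCast _).symm
  have h2 : (k : ENNReal) = ENNReal.ofReal (k : ℝ) := (ENNReal.ofReal_natCast _).symm
  rw [h1, h2, ← ENNReal.ofReal_mul (by linarith : (0:ℝ) ≤ 1 - α)]
  apply ENNReal.ofReal_le_ofReal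
  have := Nat.le_ceil ((1 - α) * ((N : ℝ) + 1))
  rw [← hk] at this
  push_cast
  linarith
end

section
/- Let N, T ∈ ℕ, α ∈ (0,1), and let S₁, …, S_{N+1} be random functions from {1, …, T} to ℝ on a probability space whose joint distribution is invariant under every permutation of the N+1 indices (exchangeability). Fix deterministic functions μ : {1, …, T} → ℝ and s : {1, …, T} → ℝ with s(t) > 0 for all t, and define D_j := max_{t ∈ {1,…,T}} (S_j(t) − μ(t)) / s(t) for each j. Let k := ⌈(1−α)(N+1)⌉, suppose k ≤ N, and let h denote the k-th smallest value among D₁, …, D_N. Then P(S_{N+1}(t) ≤ μ(t) + h·s(t) for all t ∈ {1, …, T}) ≥ 1 − α. -/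
open List in
private lemma aux_sorted_getD_iff (x : ℝ) :
    ∀ (l : List ℝ) (_ : l.Pairwise (· ≤ ·)) (k : ℕ) (_ : 1 ≤ k) (_ : k ≤ l.length),
      (x ≤ l.getD (k-1) 0 ↔ l.countP (fun y => decide (y < x)) < k)
  | [], _, k, hk1, hk => by simp at hk; omega
  | a :: tl, hl, k, hk1, hk => by
    rw [List.pairwise_cons] at hl
    obtain ⟨ha, htl⟩ := hl
    match k, hk1 with
    | 1, _ =>
      simp only [Nat.sub_self, List.getD_cons_zero, List.countP_cons, Nat.lt_one_iff,
        Nat.add_eq_zero]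
      constructor
      · intro hxa
        refine ⟨List.countP_eq_zero.2 fun y hy => by
          simp only [decide_eq_true_eq]
          exact not_lt.2 (hxa.trans (ha y hy)), by simp [not_lt.2 hxa]⟩
      · rintro ⟨-, h2⟩
        simpa using h2
    | (m+2), _ =>
      have hlen : m + 1 ≤ tl.length := by
        simpa using Nat.lt_of_succ_lt_succ (Nat.lt_of_lt_of_le (Nat.lt_succ_self _) hk)
      have IH := aux_sorted_getD_iff x tl htl (m+1) (Nat.succ_le_succ (Nat.zero_le _)) hlen
      have hget : (a :: tl).getD (m + 2 - 1) 0 = tl.getD (m + 1 - 1) 0 := by simp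
      rw [hget, List.countP_cons]
      by_cases hax : a < x
      · simp only [hax, decide_eq_true_eq, if_pos]
        rw [IH]; omega
      · have h0 : tl.countP (fun y => decide (y < x)) = 0 :=
          List.countP_eq_zero.2 fun y hy => by
            simp only [decide_eq_true_eq]
            exact not_lt.2 ((not_lt.1 hax).trans (ha y hy))
        have hmem : tl.getD (m + 1 - 1) 0 ∈ tl := by
          rw [List.getD_eq_getElem _ _ (by omega)]
          exact List.getElem_mem _
        simp only [h0, hax, decide_eq_true_eq, if_neg, not_false_iff]
        exact ⟨fun _ => by omega, fun _ => (not_lt.1 hax).trans (ha _ hmem)⟩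

private lemma aux_sorted_getD_countP :
    ∀ (l : List ℝ) (_ : l.Pairwise (· ≤ ·)) (k : ℕ) (_ : 1 ≤ k) (_ : k ≤ l.length)
      (x : ℝ) (_ : l.getD (k-1) 0 ≤ x), k ≤ l.countP (fun y => decide (y ≤ x))
  | [], _, k, hk1, hk, _, _ => by simp at hk; omega
  | a :: tl, hl, k, hk1, hk, x, hx => by
    rw [List.pairwise_cons] at hl
    obtain ⟨ha, htl⟩ := hl
    match k, hk1 with
    | 1, _ =>
      simp only [Nat.sub_self, List.getD_cons_zero] at hx
      rw [List.countP_cons]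
      simp [hx]
    | (m+2), _ =>
      have hlen : m + 1 ≤ tl.length := by
        simpa using Nat.lt_of_succ_lt_succ (Nat.lt_of_lt_of_le (Nat.lt_succ_self _) hk)
      have hget : (a :: tl).getD (m + 2 - 1) 0 = tl.getD (m + 1 - 1) 0 := by simp
      rw [hget] at hx
      have IH := aux_sorted_getD_countP tl htl (m+1) (Nat.succ_le_succ (Nat.zero_le _)) hlen x hx
      have hmem : tl.getD (m + 1 - 1) 0 ∈ tl := by
        rw [List.getD_eq_getElem _ _ (by omega)]
        exact List.getElem_mem _
      have hax : a ≤ x := (ha _ hmem).trans hx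
      rw [List.countP_cons]
      simp only [hax, decide_eq_true_eq, if_pos]
      omega

private lemma aux_countP_ofFn_sum {n : ℕ} (d : Fin n → ℝ) (p : ℝ → Bool) :
    (List.ofFn d).countP p = ∑ j : Fin n, if p (d j) then 1 else 0 := by
  induction n with
  | zero => simp
  | succ n ih =>
    rw [List.ofFn_succ, List.countP_cons, Fin.sum_univ_succ, ih]
    exact Nat.add_comm _ _

private lemma aux_countP_ofFn {n : ℕ} (d : Fin n → ℝ) (p : ℝ → Bool) :
    (List.ofFn d).countP p = (Finset.univ.filter fun j => p (d j)).card := by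
  rw [aux_countP_ofFn_sum, Finset.card_filter]

private lemma aux_mergeSort_pairwise (L : List ℝ) :
    (L.mergeSort (· ≤ ·)).Pairwise (· ≤ ·) := by
  have := List.pairwise_mergeSort (le := fun a b : ℝ => decide (a ≤ b))
    (fun a b c hab hbc => by
      simp only [decide_eq_true_eq] at *; exact le_trans hab hbc)
    (fun a b => by simpa [decide_eq_true_eq, Bool.or_eq_true] using le_total a b) L
  exact this.imp (by simp)

private lemma aux_count_low_ranks {n : ℕ} (d : Fin n → ℝ) (k : ℕ) (hk1 : 1 ≤ k) (hk : k ≤ n) :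
    k ≤ (Finset.univ.filter fun i =>
        (Finset.univ.filter fun j => d j < d i).card < k).card := by
  set l := (List.ofFn d).mergeSort (· ≤ ·) with hl
  have hsorted : l.Pairwise (· ≤ ·) := aux_mergeSort_pairwise _
  have hperm : l.Perm (List.ofFn d) := List.mergeSort_perm _ _
  have hlen : l.length = n := by rw [hperm.length_eq, List.length_ofFn]
  set v := l.getD (k-1) 0 with hv
  have h1 : (Finset.univ.filter fun j => d j < v).card < k := by
    have := (aux_sorted_getD_iff v l hsorted k hk1 (by omega)).1 le_rfl
    rw [hperm.countP_eq, aux_countP_ofFn] at this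
    simpa using this
  have h2 : k ≤ (Finset.univ.filter fun j => d j ≤ v).card := by
    have := aux_sorted_getD_countP l hsorted k hk1 (by omega) v le_rfl
    rw [hperm.countP_eq, aux_countP_ofFn] at this
    simpa using this
  refine le_trans h2 (Finset.card_le_card ?_)
  intro i hi
  simp only [Finset.mem_filter, Finset.mem_univ, true_and] at hi ⊢
  calc (Finset.univ.filter fun j => d j < d i).card
      ≤ (Finset.univ.filter fun j => d j < v).card :=
        Finset.card_le_card (by
          intro j hj
          simp only [Finset.mem_filter, Finset.mem_univ, true_and] at hj ⊢
          exact lt_of_lt_of_le hj hi)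
    _ < k := h1


open MeasureTheory ENNReal

private lemma aux_meas_card {δ : Type*} [MeasurableSpace δ] {n : ℕ}
    (g : Fin n → δ → ℝ) (hg : ∀ j, Measurable (g j)) (i : Fin n) (k : ℕ) :
    MeasurableSet {x | (Finset.univ.filter fun j => g j x < g i x).card < k} := by
  have hm : Measurable fun x => (Finset.univ.filter fun j => g j x < g i x).card := by
    have he : (fun x => (Finset.univ.filter fun j => g j x < g i x).card)
        = fun x => ∑ j, if g j x < g i x then 1 else 0 :=
      funext fun x => Finset.card_filter _ _
    rw [he]
    exact Finset.measurable_sum _ fun j _ =>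
      Measurable.ite (measurableSet_lt (hg j) (hg i)) measurable_const measurable_const
  exact hm ((Set.to_countable (Set.Iio k)).measurableSet)

/-- Functional conformal prediction band guarantee: given exchangeable score
trajectories `S 0, …, S N : Ω → (Fin T → ℝ)` (the first `N` being calibration
rollouts, the last the new rollout), a mean trajectory `μf`, a positive
modulation function `s`, the maximal modulated deviations
`D j = max_t (S j t - μf t) / s t`, `k = ⌈(1-α)(N+1)⌉ ≤ N`, and `h` the `k`-th
smallest of the calibration deviations `D 1, …, D N`, the band
`t ↦ μf t + h * s t` contains the new trajectory at all times simultaneously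
with probability at least `1 - α`. -/
theorem functional_conformal_band_coverage
    {Ω : Type*} {mΩ : MeasurableSpace Ω} (μ : Measure Ω) [IsProbabilityMeasure μ]
    (N T : ℕ) (hT : 0 < T) (α : ℝ) (hα : α ∈ Set.Ioo (0 : ℝ) 1)
    (S : Fin (N + 1) → Ω → Fin T → ℝ) (hS : ∀ i, Measurable (S i))
    (hexch : ∀ σ : Equiv.Perm (Fin (N + 1)),
      Measure.map (fun ω (i : Fin (N + 1)) => S (σ i) ω) μ
        = Measure.map (fun ω (i : Fin (N + 1)) => S i ω) μ)
    (μf s : Fin T → ℝ) (hs : ∀ t, 0 < s t)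
    (D : Fin (N + 1) → Ω → ℝ)
    (hD : ∀ j ω, D j ω =
      Finset.univ.sup' ⟨(⟨0, hT⟩ : Fin T), Finset.mem_univ _⟩
        (fun t : Fin T => (S j ω t - μf t) / s t))
    (k : ℕ) (hk : k = ⌈(1 - α) * (N + 1 : ℝ)⌉₊) (hkN : k ≤ N)
    (h : Ω → ℝ)
    (hh : ∀ ω, h ω =
      (((List.ofFn fun i : Fin N => D i.castSucc ω).mergeSort (· ≤ ·)).getD (k - 1) 0)) :
    ENNReal.ofReal (1 - α)
      ≤ μ {ω | ∀ t : Fin T, S (Fin.last N) ω t ≤ μf t + h ω * s t} := by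
  obtain ⟨hα0, hα1⟩ := hα
  have hne : (Finset.univ : Finset (Fin T)).Nonempty := ⟨⟨0, hT⟩, Finset.mem_univ _⟩
  have hk1 : 1 ≤ k := by
    rw [hk]
    have hpos : (0:ℝ) < 1 - α := by linarith
    exact Nat.ceil_pos.2 (by positivity)
  -- measurability of D
  have Dmeas : ∀ j, Measurable (D j) := by
    intro j
    have he : D j = Finset.univ.sup' hne (fun t ω => (S j ω t - μf t) / s t) := by
      funext ω
      rw [hD j ω, Finset.sup'_apply]
    rw [he]
    exact Finset.measurable_sup' hne fun t _ =>
      (((measurable_pi_apply t).comp (hS j)).sub measurable_const).div_const _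
  -- the rank events
  set A : Fin (N + 1) → Set Ω := fun i =>
    {ω | (Finset.univ.filter fun j => D j ω < D i ω).card < k} with hA
  have hmeasA : ∀ i, MeasurableSet (A i) := fun i => aux_meas_card D Dmeas i k
  -- A (last) is contained in the coverage event
  have hAsub : A (Fin.last N) ⊆
      {ω | ∀ t : Fin T, S (Fin.last N) ω t ≤ μf t + h ω * s t} := by
    intro ω hω
    have hωc : (Finset.univ.filter
        fun j => D j ω < D (Fin.last N) ω).card < k := hω
    -- count among the first N calibration scores
    have hcount : (Finset.univ.filter
        fun i : Fin N => D i.castSucc ω < D (Fin.last N) ω).card < k := by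
      refine lt_of_le_of_lt ?_ hωc
      refine Finset.card_le_card_of_injOn (fun i => i.castSucc) ?_
        (Fin.castSucc_injective N).injOn
      intro i hi
      simp only [Finset.mem_coe, Finset.mem_filter, Finset.mem_univ, true_and] at hi ⊢
      exact hi
    set L : List ℝ := List.ofFn fun i : Fin N => D i.castSucc ω with hL
    have hperm : (L.mergeSort (· ≤ ·)).Perm L := List.mergeSort_perm _ _
    have hlen : (L.mergeSort (· ≤ ·)).length = N := by
      rw [hperm.length_eq, hL, List.length_ofFn]
    have hsorted := aux_mergeSort_pairwise L
    have hcnt : (L.mergeSort (· ≤ ·)).countP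
        (fun y => decide (y < D (Fin.last N) ω)) < k := by
      rw [hperm.countP_eq, hL, aux_countP_ofFn]
      refine lt_of_le_of_lt (le_of_eq ?_) hcount
      congr 1
      ext i
      simp
    have hDh : D (Fin.last N) ω ≤ h ω := by
      rw [hh ω]
      exact (aux_sorted_getD_iff (D (Fin.last N) ω) (L.mergeSort (· ≤ ·)) hsorted k hk1
        (by omega)).2 hcnt
    intro t
    have ht : (S (Fin.last N) ω t - μf t) / s t ≤ D (Fin.last N) ω := by
      rw [hD]
      exact Finset.le_sup' (fun t : Fin T => (S (Fin.last N) ω t - μf t) / s t)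
        (Finset.mem_univ t)
    have := (div_le_iff₀ (hs t)).1 (ht.trans hDh)
    linarith
  -- exchangeability transported to D
  have gmeas : Measurable fun v : Fin T → ℝ =>
      Finset.univ.sup' hne (fun t => (v t - μf t) / s t) := by
    have he : (fun v : Fin T → ℝ => Finset.univ.sup' hne (fun t => (v t - μf t) / s t))
        = Finset.univ.sup' hne (fun t (v : Fin T → ℝ) => (v t - μf t) / s t) := by
      funext v
      rw [Finset.sup'_apply]
    rw [he]
    exact Finset.measurable_sup' hne fun t _ =>
      ((measurable_pi_apply t).sub measurable_const).div_const _
  set G : (Fin (N + 1) → (Fin T → ℝ)) → (Fin (N + 1) → ℝ) :=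
    fun f i => Finset.univ.sup' hne (fun t => (f i t - μf t) / s t) with hG
  have Gmeas : Measurable G :=
    measurable_pi_lambda _ fun i => gmeas.comp (measurable_pi_apply i)
  have hcompσ : ∀ σ : Equiv.Perm (Fin (N + 1)),
      (fun ω (j : Fin (N + 1)) => D (σ j) ω)
        = G ∘ (fun ω (i : Fin (N + 1)) => S (σ i) ω) := by
    intro σ
    funext ω
    funext j
    rw [hD]
    rfl
  have hmapD : ∀ σ : Equiv.Perm (Fin (N + 1)),
      Measure.map (fun ω (j : Fin (N + 1)) => D (σ j) ω) μ
        = Measure.map (fun ω (j : Fin (N + 1)) => D j ω) μ := by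
    intro σ
    have h1 := hcompσ σ
    have h2 := hcompσ 1
    simp only [Equiv.Perm.coe_one, id_eq] at h2
    rw [h1, h2, ← Measure.map_map Gmeas (measurable_pi_lambda _ fun i => hS (σ i)),
      ← Measure.map_map Gmeas (measurable_pi_lambda _ fun i => hS i), hexch σ]
  -- all the events A i have the same measure
  set B : Set (Fin (N + 1) → ℝ) :=
    {f | (Finset.univ.filter fun j => f j < f (Fin.last N)).card < k} with hB
  have Bmeas : MeasurableSet B :=
    aux_meas_card (fun j (f : Fin (N + 1) → ℝ) => f j)
      (fun j => measurable_pi_apply j) (Fin.last N) k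
  have hAeq : ∀ i, μ (A i) = μ (A (Fin.last N)) := by
    intro i
    set σ := Equiv.swap i (Fin.last N) with hσ
    have hpre1 : A i = (fun ω (j : Fin (N + 1)) => D (σ j) ω) ⁻¹' B := by
      ext ω
      simp only [hA, hB, Set.mem_preimage, Set.mem_setOf_eq]
      have h1 : σ (Fin.last N) = i := Equiv.swap_apply_right _ _
      have h2 : (Finset.univ.filter fun j => D (σ j) ω < D (σ (Fin.last N)) ω).card
          = (Finset.univ.filter fun j => D j ω < D i ω).card := by
        rw [h1]
        exact Finset.card_equiv σ (fun j => by simp)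
      rw [h2]
    have hpre2 : A (Fin.last N) = (fun ω (j : Fin (N + 1)) => D j ω) ⁻¹' B := by
      ext ω
      simp only [hA, hB, Set.mem_preimage, Set.mem_setOf_eq]
    rw [hpre1, hpre2,
      ← Measure.map_apply (measurable_pi_lambda _ fun j => Dmeas (σ j)) Bmeas,
      ← Measure.map_apply (measurable_pi_lambda _ fun j => Dmeas j) Bmeas, hmapD σ]
  -- pointwise: at least k of the events hold
  have hptw : ∀ ω, (k : ℝ≥0∞) ≤ ∑ i, (A i).indicator (fun _ => (1 : ℝ≥0∞)) ω := by
    intro ω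
    have hc := aux_count_low_ranks (fun j => D j ω) k hk1 (by omega)
    have hcard : ((Finset.univ.filter fun i => ω ∈ A i).card : ℝ≥0∞)
        = ∑ i, (A i).indicator (fun _ => (1 : ℝ≥0∞)) ω := by
      rw [Finset.card_filter, Nat.cast_sum]
      refine Finset.sum_congr rfl fun i _ => ?_
      by_cases hω : ω ∈ A i <;> simp [hω, Set.indicator_apply]
    rw [← hcard]
    exact_mod_cast hc
  -- sum of measures is at least k
  have hsum : (k : ℝ≥0∞) ≤ ∑ i, μ (A i) := by
    have he : ∑ i, μ (A i) = ∫⁻ ω, ∑ i, (A i).indicator (fun _ => (1 : ℝ≥0∞)) ω ∂μ := by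
      rw [lintegral_finset_sum _ fun i _ => measurable_const.indicator (hmeasA i)]
      exact Finset.sum_congr rfl fun i _ => (lintegral_indicator_one (hmeasA i)).symm
    rw [he]
    calc (k : ℝ≥0∞) = ∫⁻ _, (k : ℝ≥0∞) ∂μ := by simp
      _ ≤ _ := lintegral_mono hptw
  have hconst : ∑ i, μ (A i) = ((N : ℝ≥0∞) + 1) * μ (A (Fin.last N)) := by
    rw [Finset.sum_congr rfl fun i _ => hAeq i, Finset.sum_const, Finset.card_univ,
      Fintype.card_fin, nsmul_eq_mul]
    push_cast
    ring
  -- conclude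
  have hklb : ((N : ℝ≥0∞) + 1) * ENNReal.ofReal (1 - α) ≤ (k : ℝ≥0∞) := by
    have h1 : (1 - α) * ((N : ℝ) + 1) ≤ (k : ℝ) := by
      rw [hk]
      exact Nat.le_ceil _
    calc ((N : ℝ≥0∞) + 1) * ENNReal.ofReal (1 - α)
        = ENNReal.ofReal ((1 - α) * ((N : ℝ) + 1)) := by
          rw [ENNReal.ofReal_mul (by linarith)]
          rw [mul_comm]
          congr 1
          rw [← ENNReal.ofReal_natCast N]
          rw [← ENNReal.ofReal_one, ← ENNReal.ofReal_add (by positivity) (by norm_num)]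
      _ ≤ (k : ℝ≥0∞) := by
          rw [← ENNReal.ofReal_natCast k]
          exact ENNReal.ofReal_le_ofReal h1
  have hfinal : ENNReal.ofReal (1 - α) ≤ μ (A (Fin.last N)) := by
    have hmul : ((N : ℝ≥0∞) + 1) * ENNReal.ofReal (1 - α)
        ≤ ((N : ℝ≥0∞) + 1) * μ (A (Fin.last N)) := by
      rw [← hconst]
      exact hklb.trans hsum
    exact (ENNReal.mul_le_mul_iff_right (by simp) (by simp)).1 hmul
  exact hfinal.trans (measure_mono hAsub)
end
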